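/- Every stable match is realized by some pure-strategy Nash equilibrium of the matching game: if μ is a stable match, then the action profile a defined by a_i = μ_{P_i} when proposer P_i is matched in μ and a_i = ∅ when P_i is unmatched in μ is a Nash equilibrium, and the resulting match satisfies μ(a) = μ. -/

import Mathlib

set_option linter.unusedSectionVars false
/-- A two-sided matching market with proposers `P` and acceptors `A`.
`OP i` is proposer `i`'s preference function over `A ∪ {∅}` (where `none` is `∅`),
and `OA j` is acceptor `j`'s preference function over `P ∪ {∅}`. -/
structure Market (P A : Type) [Fintype P] [Fintype A] where
  OP : P → Option A → ℝ
  OA : A → Option P → ℝ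
  OP_inj : ∀ i, Function.Injective (OP i)
  OA_inj : ∀ j, Function.Injective (OA j)
  OP_none : ∀ i, OP i none = 0
  OA_none : ∀ j, OA j none = 0
  OP_pos : ∀ i j, 0 < OP i (some j)
  OA_pos : ∀ j i, 0 < OA j (some i)
  OP_le_one : ∀ i o, OP i o ≤ 1
  OA_le_one : ∀ j o, OA j o ≤ 1

/-- A match: each proposer gets a partner in `A ∪ {∅}`, each acceptor a partner
in `P ∪ {∅}`, consistently. -/
structure Matching (P A : Type) where
  μP : P → Option A
  μA : A → Option P
  consistent : ∀ i j, μP i = some j ↔ μA j = some i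

/-- A match is stable if there is no proposer–acceptor pair who strictly prefer
each other to their assigned partners. -/
def Stable {P A : Type} [Fintype P] [Fintype A] (M : Market P A) (μ : Matching P A) : Prop :=
  ¬ ∃ (i : P) (j : A), M.OP i (some j) > M.OP i (μ.μP i) ∧ M.OA j (some i) > M.OA j (μ.μA j)

variable {P A : Type} [Fintype P] [Fintype A] [DecidableEq P] [DecidableEq A]

/-- Given an action profile `a`, acceptor `j` accepts its most preferred
proposer among those proposing to it (if any). -/
noncomputable def accept (M : Market P A) (a : P → Option A) (j : A) : Option P :=
  if h : (Finset.univ.filter fun i => a i = some j).Nonempty then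
    some (Classical.choose
      ((Finset.univ.filter fun i => a i = some j).exists_max_image
        (fun i => M.OA j (some i)) h))
  else none

theorem accept_spec {M : Market P A} {a : P → Option A} {j : A} {i : P}
    (h : accept M a j = some i) :
    a i = some j ∧ ∀ i', a i' = some j → M.OA j (some i') ≤ M.OA j (some i) := by
  unfold accept at h
  split_ifs at h with hne
  · obtain ⟨hmem, hmax⟩ := Classical.choose_spec
      ((Finset.univ.filter fun i => a i = some j).exists_max_image
        (fun i => M.OA j (some i)) hne)
    have hi : Classical.choose
        ((Finset.univ.filter fun i => a i = some j).exists_max_image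
          (fun i => M.OA j (some i)) hne) = i := Option.some_injective _ h
    rw [hi] at hmem hmax
    refine ⟨by simpa using hmem, fun i' hi' => hmax i' (by simpa using hi')⟩

theorem accept_of_propose {M : Market P A} {a : P → Option A} {j : A} {i : P}
    (h : a i = some j) : ∃ i', accept M a j = some i' := by
  unfold accept
  have hne : (Finset.univ.filter fun i => a i = some j).Nonempty :=
    ⟨i, by simpa using h⟩
  rw [dif_pos hne]
  exact ⟨_, rfl⟩

/-- The match resulting from an action profile `a`. -/
noncomputable def matchOf (M : Market P A) (a : P → Option A) : Matching P A where
  μP i := (a i).bind fun j => if accept M a j = some i then some j else none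
  μA j := accept M a j
  consistent := by
    intro i j
    constructor
    · intro h
      rcases Option.bind_eq_some_iff.mp h with ⟨j', hj', hif⟩
      by_cases hc : accept M a j' = some i
      · rw [if_pos hc] at hif
        exact (Option.some_injective _ hif) ▸ hc
      · rw [if_neg hc] at hif
        exact absurd hif (by simp)
    · intro h
      have hai : a i = some j := (accept_spec h).1
      show (a i).bind _ = some j
      rw [hai]
      simp [h]

/-- The utility of proposer `i` under action profile `a`. -/
noncomputable def util (M : Market P A) (a : P → Option A) (i : P) : ℝ :=
  M.OP i ((matchOf M a).μP i)

/-- Pure Nash equilibrium: no proposer can strictly increase its utility by a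
unilateral deviation. -/
def IsNash (M : Market P A) (a : P → Option A) : Prop :=
  ∀ (i : P) (a' : Option A), util M (Function.update a i a') i ≤ util M a i

theorem accept_eq_muA (M : Market P A) (μ : Matching P A) (j : A) :
    accept M μ.μP j = μ.μA j := by
  cases hA : μ.μA j with
  | none =>
    unfold accept
    rw [dif_neg]
    rintro ⟨i, hi⟩
    simp only [Finset.mem_filter, Finset.mem_univ, true_and] at hi
    rw [(μ.consistent i j).mp hi] at hA
    cases hA
  | some i =>
    have hP : μ.μP i = some j := (μ.consistent i j).mpr hA
    obtain ⟨i', hi'⟩ := accept_of_propose (M := M) hP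
    have : μ.μA j = some i' := (μ.consistent i' j).mp (accept_spec hi').1
    rw [hA] at this
    rw [hi']
    exact this.symm

theorem Matching.ext' {μ1 μ2 : Matching P A} (h1 : μ1.μP = μ2.μP)
    (h2 : μ1.μA = μ2.μA) : μ1 = μ2 := by
  cases μ1; cases μ2
  simp only at h1 h2
  subst h1; subst h2
  rfl

theorem matchOf_muP (M : Market P A) (μ : Matching P A) :
    matchOf M μ.μP = μ := by
  have hμA : ∀ j, (matchOf M μ.μP).μA j = μ.μA j := fun j => accept_eq_muA M μ j
  have hμP : ∀ i, (matchOf M μ.μP).μP i = μ.μP i := by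
    intro i
    show (μ.μP i).bind _ = μ.μP i
    cases hP : μ.μP i with
    | none => rfl
    | some j =>
      have : accept M μ.μP j = some i := by
        rw [accept_eq_muA]; exact (μ.consistent i j).mp hP
      simp [this]
  exact Matching.ext' (funext hμP) (funext hμA)

theorem OP_nonneg (M : Market P A) (i : P) (o : Option A) : 0 ≤ M.OP i o := by
  cases o with
  | none => rw [M.OP_none]
  | some j => exact (M.OP_pos i j).le

/-- Every stable match is realized by a pure-strategy Nash equilibrium: proposing
directly to one's partner (or remaining single if unmatched) is a Nash equilibrium
that reproduces the stable match. -/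
theorem stable_implies_nash [Nonempty P] [Nonempty A]
    (M : Market P A) (μ : Matching P A) (h : Stable M μ) :
    IsNash M μ.μP ∧ matchOf M μ.μP = μ := by
  refine ⟨?_, matchOf_muP M μ⟩
  intro i a'
  have hutil : util M μ.μP i = M.OP i (μ.μP i) := by
    unfold util; rw [matchOf_muP]
  rw [hutil]
  set b := Function.update μ.μP i a' with hb
  have hbi : b i = a' := Function.update_self i a' μ.μP
  unfold util
  show M.OP i ((b i).bind _) ≤ _
  rw [hbi]
  cases a' with
  | none => rw [Option.bind_none, M.OP_none]; exact OP_nonneg M i _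
  | some j =>
    rw [Option.bind_some]
    by_cases hacc : accept M b j = some i
    · rw [if_pos hacc]
      by_contra hlt
      push_neg at hlt
      apply h
      refine ⟨i, j, hlt, ?_⟩
      have hne : μ.μP i ≠ some j := fun he => by rw [he] at hlt; exact lt_irrefl _ hlt
      cases hA : μ.μA j with
      | none => rw [M.OA_none]; exact M.OA_pos j i
      | some i0 =>
        have hi0 : i0 ≠ i := fun he => hne ((μ.consistent i j).mpr (he ▸ hA))
        have hbi0 : b i0 = some j := by
          rw [hb, Function.update_of_ne hi0]
          exact (μ.consistent i0 j).mpr hA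
        have hle := (accept_spec hacc).2 i0 hbi0
        rcases lt_or_eq_of_le hle with hlt' | heq
        · exact hlt'
        · exact absurd (Option.some_injective _ (M.OA_inj j heq)) hi0
    · rw [if_neg hacc, M.OP_none]; exact OP_nonneg M i _
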